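/- arXiv:2302.10122 — 3 statements merged into one kernel-verified Lean document; each statement's English description precedes it below -/
import Mathlib

section
/- For every 2π-periodic continuously differentiable function f on the circle whose Fourier coefficients vanish for all frequencies j with |j| ≤ k−1 (i.e. f is orthogonal in L² to all trigonometric polynomials of degree ≤ k−1), one has ‖f'‖_∞ ≥ (2k/π)·‖f‖_∞. -/
open Real MeasureTheory intervalIntegral

lemma exists_sign_point (g : ℝ → ℝ) (a b : ℝ) (hab : a ≤ b)
    (hm : ∀ x ∈ Set.Icc a b, ∀ y ∈ Set.Icc a b, x ≤ y → g x ≤ g y) :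
    ∃ s ∈ Set.Icc a b, (∀ x ∈ Set.Ico a s, g x ≤ 0) ∧ (∀ x ∈ Set.Ioc s b, 0 ≤ g x) := by
  classical
  set S : Set ℝ := insert a {x ∈ Set.Icc a b | g x ≤ 0} with hS
  have hne : S.Nonempty := ⟨a, Set.mem_insert _ _⟩
  have hbdd : BddAbove S := by
    refine ⟨b, fun y hy => ?_⟩
    rcases hy with rfl | hy
    · exact hab
    · exact hy.1.2
  refine ⟨sSup S, ⟨le_csSup hbdd (Set.mem_insert _ _), csSup_le hne fun y hy => ?_⟩, ?_, ?_⟩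
  · rcases hy with rfl | hy
    · exact hab
    · exact hy.1.2
  · rintro x ⟨hax, hxs⟩
    obtain ⟨y, hyS, hxy⟩ := exists_lt_of_lt_csSup hne hxs
    rcases hyS with rfl | hyS
    · exact absurd hxy (not_lt.2 hax)
    · exact le_trans (hm x ⟨hax, le_trans hxy.le hyS.1.2⟩ y hyS.1 hxy.le) hyS.2
  · rintro x ⟨hsx, hxb⟩
    by_contra hc
    push_neg at hc
    have hxS : x ∈ S := Set.mem_insert_of_mem _ ⟨⟨le_trans (le_csSup hbdd (Set.mem_insert _ _)) hsx.le, hxb⟩, hc.le⟩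
    exact absurd (le_csSup hbdd hxS) (not_le.2 hsx)

lemma integral_smul_shift (g : ℝ → ℂ) (c : ℝ) (q : ℂ) (hg : ∀ x, g (x + c) = q * g x)
    (hcont : Continuous g) (N : ℕ) :
    ∫ x in (0:ℝ)..(N * c), g x = (∑ m ∈ Finset.range N, q ^ m) * ∫ x in (0:ℝ)..c, g x := by
  have hiter : ∀ (m : ℕ) (x : ℝ), g (x + m * c) = q ^ m * g x := by
    intro m
    induction m with
    | zero => simp
    | succ m ih =>
        intro x
        have : x + (m + 1 : ℕ) * c = (x + c) + m * c := by push_cast; ring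
        rw [this, ih, hg, pow_succ]
        ring
  induction N with
  | zero => simp
  | succ N ih =>
      have h1 : (∫ x in (0:ℝ)..((N:ℝ) * c), g x) + (∫ x in ((N:ℝ) * c)..(((N:ℕ)+1 : ℕ) * c), g x)
          = ∫ x in (0:ℝ)..(((N:ℕ)+1 : ℕ) * c), g x :=
        integral_add_adjacent_intervals (hcont.intervalIntegrable _ _) (hcont.intervalIntegrable _ _)
      have h2 : ∫ x in ((N:ℝ) * c)..(((N:ℕ)+1 : ℕ) * c), g x = q ^ N * ∫ x in (0:ℝ)..c, g x := by
        have : ∫ x in (0:ℝ)..c, g (x + (N:ℝ) * c) = ∫ x in ((0:ℝ) + (N:ℝ)*c)..(c + (N:ℝ)*c), g x :=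
          intervalIntegral.integral_comp_add_right _ _
        rw [zero_add] at this
        have hc : c + (N:ℝ) * c = ((N:ℕ)+1 : ℕ) * c := by push_cast; ring
        rw [← hc, ← this]
        simp only [hiter N]
        exact intervalIntegral.integral_const_mul _ _
      rw [← h1, ih, h2, Finset.sum_range_succ]
      ring
lemma arcsin_cos_affine : ∀ (ν : ℕ), ∀ θ ∈ Set.Icc ((ν:ℝ) * π) (((ν:ℝ)+1) * π),
    Real.arcsin (Real.cos θ) = (-1:ℝ)^ν * ((ν:ℝ) * π + π/2 - θ) := by
  intro ν
  induction ν with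
  | zero =>
      intro θ hθ
      simp only [Nat.cast_zero, zero_mul, zero_add, one_mul] at hθ ⊢
      rw [← Real.sin_pi_div_two_sub θ, Real.arcsin_sin (by linarith [hθ.2]) (by linarith [hθ.1])]
      simp [pow_zero]
  | succ ν ih =>
      intro θ hθ
      have hθ' : θ - π ∈ Set.Icc ((ν:ℝ) * π) (((ν:ℝ)+1) * π) := by
        constructor
        · push_cast at hθ; linarith [hθ.1]
        · push_cast at hθ; linarith [hθ.2]
      have hcos : Real.cos θ = -Real.cos (θ - π) := by
        rw [← Real.cos_add_pi (θ - π)]; ring_nf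
      rw [hcos, Real.arcsin_neg, ih _ hθ', pow_succ]
      push_cast
      ring

lemma prod_eq_neg_one_pow_card_mul (S : Finset ℕ) (g : ℕ → ℝ) :
    ∏ i ∈ S, g i = (-1:ℝ)^S.card * ∏ i ∈ S, (-(g i)) := by
  have : ∀ i ∈ S, g i = (-1:ℝ) * (-(g i)) := by intro i _; ring
  rw [Finset.prod_congr rfl this, Finset.prod_mul_distrib, Finset.prod_const]

lemma sin_half_expand (z : ℂ) :
    Complex.sin z = (Complex.exp (2*z*Complex.I) - 1) * Complex.exp (-z*Complex.I) * (1/(2*Complex.I)) := by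
  have h1 : Complex.exp (2*z*Complex.I) * Complex.exp (-z*Complex.I) = Complex.exp (z*Complex.I) := by
    rw [← Complex.exp_add]; ring_nf
  have h2 : (1:ℂ)/(2*Complex.I) = -Complex.I/2 := by
    rw [div_eq_iff (by simp [Complex.I_ne_zero] : (2:ℂ)*Complex.I ≠ 0)]
    linear_combination Complex.I_sq
  rw [Complex.sin, h2]
  linear_combination (Complex.I/2) * h1
lemma integral_mul_prod_sin (n : ℕ) (h : ℝ → ℝ) (hc : Continuous h) (s : ℕ → ℝ)
    (horth : ∀ j : ℤ, |j| ≤ (n:ℤ) →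
       (∫ x in (0:ℝ)..(2*π), (h x : ℂ) * Complex.exp ((j:ℂ) * x * Complex.I)) = 0) :
    (∫ x in (0:ℝ)..(2*π), h x * ∏ i ∈ Finset.Icc 1 (2*n), Real.sin ((x - s i)/2)) = 0 := by
  classical
  set P : Polynomial ℂ :=
    ∏ i ∈ Finset.Icc 1 (2*n),
      (Polynomial.C (Complex.exp (-(s i:ℂ) * Complex.I)) * Polynomial.X - 1) with hP
  have hdeg : P.natDegree < 2*n + 1 := by
    have h1 : P.natDegree ≤ 2*n := by
      refine le_trans (Polynomial.natDegree_prod_le _ _) ?_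
      refine le_trans (Finset.sum_le_card_nsmul _ _ 1 ?_) (by simp [Nat.card_Icc])
      intro i _
      refine le_trans (Polynomial.natDegree_sub_le _ _) (max_le ?_ (by simp))
      exact le_trans (Polynomial.natDegree_C_mul_le _ _) (by simp)
    omega
  set D : ℂ := Complex.exp (((∑ i ∈ Finset.Icc 1 (2*n), s i : ℝ) : ℂ) * Complex.I / 2)
      * (1/(2*Complex.I))^(2*n) with hD
  have key : ∀ x : ℝ,
      ((h x * ∏ i ∈ Finset.Icc 1 (2*n), Real.sin ((x - s i)/2) : ℝ) : ℂ)
        = ∑ j ∈ Finset.range (2*n+1),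
            (P.coeff j * D) * ((h x : ℂ) *
              Complex.exp ((((j:ℤ) - (n:ℤ) : ℤ) : ℂ) * x * Complex.I)) := by
    intro x
    have hfac : ∀ i ∈ Finset.Icc 1 (2*n),
        ((Real.sin ((x - s i)/2) : ℝ) : ℂ)
          = (Complex.exp (-(s i:ℂ) * Complex.I) * Complex.exp ((x:ℂ) * Complex.I) - 1)
            * Complex.exp (-(((x:ℂ) - (s i:ℂ))/2) * Complex.I) * (1/(2*Complex.I)) := by
      intro i _
      have e0 : (((x - s i)/2 : ℝ) : ℂ) = ((x:ℂ) - (s i:ℂ))/2 := by push_cast; ring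
      have e1 : Complex.exp (2*(((x:ℂ) - (s i:ℂ))/2)*Complex.I)
          = Complex.exp (-(s i:ℂ) * Complex.I) * Complex.exp ((x:ℂ) * Complex.I) := by
        rw [← Complex.exp_add]; congr 1; ring
      rw [Complex.ofReal_sin, e0, sin_half_expand, e1]
    have eP : Polynomial.eval (Complex.exp ((x:ℂ) * Complex.I)) P
        = ∏ i ∈ Finset.Icc 1 (2*n),
            (Complex.exp (-(s i:ℂ) * Complex.I) * Complex.exp ((x:ℂ) * Complex.I) - 1) := by
      rw [hP, Polynomial.eval_prod]
      refine Finset.prod_congr rfl fun i _ => ?_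
      simp
    have eS : (∑ i ∈ Finset.Icc 1 (2*n), -(((x:ℂ) - (s i:ℂ))/2) * Complex.I)
        = -((2*n:ℕ):ℂ) * (x:ℂ) * Complex.I / 2
          + ((∑ i ∈ Finset.Icc 1 (2*n), s i : ℝ) : ℂ) * Complex.I / 2 := by
      rw [Finset.sum_congr rfl (fun i _ => by ring :
        ∀ i ∈ Finset.Icc 1 (2*n), -(((x:ℂ) - (s i:ℂ))/2) * Complex.I
          = -(x:ℂ) * Complex.I/2 + (s i:ℂ) * Complex.I/2)]
      rw [Finset.sum_add_distrib, Finset.sum_const, Nat.card_Icc]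
      simp only [nsmul_eq_mul, Nat.add_sub_cancel]
      rw [← Finset.sum_div, ← Finset.sum_mul]
      push_cast
      ring
    have hprod : ((∏ i ∈ Finset.Icc 1 (2*n), Real.sin ((x - s i)/2) : ℝ) : ℂ)
        = Polynomial.eval (Complex.exp ((x:ℂ) * Complex.I)) P
          * (Complex.exp (-((2*n:ℕ):ℂ) * (x:ℂ) * Complex.I / 2)
             * Complex.exp (((∑ i ∈ Finset.Icc 1 (2*n), s i : ℝ) : ℂ) * Complex.I / 2))
          * (1/(2*Complex.I))^(2*n) := by
      rw [Complex.ofReal_prod, Finset.prod_congr rfl hfac, Finset.prod_mul_distrib,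
        Finset.prod_mul_distrib, Finset.prod_const, Nat.card_Icc, ← Complex.exp_sum,
        eP, eS, Complex.exp_add, Nat.add_sub_cancel]
    rw [Complex.ofReal_mul, hprod, Polynomial.eval_eq_sum_range' hdeg, Finset.sum_mul,
      Finset.sum_mul, Finset.mul_sum]
    refine Finset.sum_congr rfl fun j hj => ?_
    rw [← Complex.exp_nat_mul, hD]
    have ec : Complex.exp ((j:ℂ) * ((x:ℂ) * Complex.I))
        * Complex.exp (-((2*n:ℕ):ℂ) * (x:ℂ) * Complex.I / 2)
        = Complex.exp ((((j:ℤ) - (n:ℤ) : ℤ) : ℂ) * x * Complex.I) := by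
      rw [← Complex.exp_add]; congr 1; push_cast; ring
    linear_combination ((h x : ℂ) * P.coeff j
      * Complex.exp (((∑ i ∈ Finset.Icc 1 (2*n), s i : ℝ) : ℂ) * Complex.I / 2)
      * (1/(2*Complex.I))^(2*n)) * ec
  have hint : ∀ j : ℕ, IntervalIntegrable
      (fun x : ℝ => (P.coeff j * D) * ((h x : ℂ) *
        Complex.exp ((((j:ℤ) - (n:ℤ) : ℤ) : ℂ) * x * Complex.I))) volume 0 (2*π) := by
    intro j
    apply Continuous.intervalIntegrable
    refine continuous_const.mul (((Complex.continuous_ofReal.comp hc)).mul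
      (Complex.continuous_exp.comp ?_))
    exact (continuous_const.mul Complex.continuous_ofReal).mul continuous_const
  have hcI : (∫ x in (0:ℝ)..(2*π),
      ((h x * ∏ i ∈ Finset.Icc 1 (2*n), Real.sin ((x - s i)/2) : ℝ) : ℂ)) = 0 := by
    rw [intervalIntegral.integral_congr (g := fun x => ∑ j ∈ Finset.range (2*n+1),
      (P.coeff j * D) * ((h x : ℂ) *
        Complex.exp ((((j:ℤ) - (n:ℤ) : ℤ) : ℂ) * x * Complex.I)))
      (fun x _ => key x)]
    rw [intervalIntegral.integral_finset_sum (fun j _ => hint j)]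
    refine Finset.sum_eq_zero fun j hj => ?_
    rw [intervalIntegral.integral_const_mul]
    have hjn : |(j:ℤ) - (n:ℤ)| ≤ (n:ℤ) := by
      rw [abs_le]
      have := Finset.mem_range.mp hj
      omega
    rw [horth _ hjn, mul_zero]
  have h2 := RCLike.intervalIntegral_ofReal (𝕜 := ℂ) (μ := volume) (a := (0:ℝ)) (b := 2*π)
    (f := fun x => h x * ∏ i ∈ Finset.Icc 1 (2*n), Real.sin ((x - s i)/2))
  have h3 := h2.symm.trans hcI
  exact RCLike.ofReal_eq_zero.mp h3

set_option maxHeartbeats 2000000 in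
lemma bohr_key (n : ℕ) (f : ℝ → ℝ) (x₀ L : ℝ)
    (hper : Function.Periodic f (2*π)) (hreg : ContDiff ℝ 1 f)
    (horth : ∀ j : ℤ, |j| ≤ (n:ℤ) →
      (∫ x in (0:ℝ)..(2*π), (f x:ℂ) * Complex.exp ((j:ℂ) * x * Complex.I)) = 0)
    (hLb : ∀ x, |deriv f x| ≤ L)
    (hlt : L * π < 2 * ((n:ℝ)+1) * f x₀) : False := by
  classical
  have hπ : (0:ℝ) < π := Real.pi_pos
  have hn1 : (0:ℝ) < (n:ℝ)+1 := by positivity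
  set c : ℝ := π / ((n:ℝ)+1) with hcdef
  have hc : 0 < c := by positivity
  have hcπ : ((n:ℝ)+1) * c = π := by rw [hcdef]; field_simp
  have hL0 : 0 ≤ L := le_trans (abs_nonneg _) (hLb 0)
  -- Lipschitz bound
  have hd : Differentiable ℝ f := hreg.differentiable one_ne_zero
  have hlipW : LipschitzWith (Real.toNNReal L) f := by
    apply lipschitzWith_of_nnnorm_deriv_le hd
    intro x
    rw [← NNReal.coe_le_coe, coe_nnnorm, Real.coe_toNNReal L hL0, Real.norm_eq_abs]
    exact hLb x
  have hlip : ∀ x y : ℝ, |f y - f x| ≤ L * |y - x| := by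
    intro x y
    have := hlipW.dist_le_mul y x
    rw [Real.dist_eq, Real.dist_eq, Real.coe_toNNReal L hL0] at this
    exact this
  set Δ : ℝ → ℝ := fun x => (L/((n:ℝ)+1)) * Real.arcsin (Real.cos (((n:ℝ)+1) * (x - x₀))) with hΔdef
  set h : ℝ → ℝ := fun x => f x - Δ x with hhdef
  set a : ℕ → ℝ := fun ν => x₀ + (ν:ℝ) * c with hadef
  have hamono : ∀ p q : ℕ, p ≤ q → a p ≤ a q := by
    intro p q hpq
    simp only [hadef]
    have : (p:ℝ) ≤ q := by exact_mod_cast hpq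
    nlinarith
  have hΔaff : ∀ ν : ℕ, ∀ x ∈ Set.Icc (a ν) (a (ν+1)),
      Δ x = (L/((n:ℝ)+1)) * ((-1:ℝ)^ν * ((ν:ℝ)*π + π/2 - ((n:ℝ)+1)*(x - x₀))) := by
    intro ν x hx
    have hθ : ((n:ℝ)+1) * (x - x₀) ∈ Set.Icc ((ν:ℝ) * π) (((ν:ℝ)+1) * π) := by
      rcases hx with ⟨h1, h2⟩
      simp only [hadef] at h1 h2
      constructor
      · rw [← hcπ]; push_cast at h1 ⊢; nlinarith
      · rw [← hcπ]; push_cast at h2 ⊢; nlinarith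
    simp only [hΔdef]
    rw [arcsin_cos_affine ν _ hθ]
  have hmono : ∀ ν : ℕ, ∀ x ∈ Set.Icc (a ν) (a (ν+1)), ∀ y ∈ Set.Icc (a ν) (a (ν+1)),
      x ≤ y → (-1:ℝ)^ν * h x ≤ (-1:ℝ)^ν * h y := by
    intro ν x hx y hy hxy
    have h1 := hlip x y
    rw [abs_of_nonneg (by linarith : (0:ℝ) ≤ y - x)] at h1
    obtain ⟨h1a, h1b⟩ := abs_le.mp h1
    have h2 : Δ y - Δ x = (-1:ℝ)^ν * (L * (x - y)) := by
      rw [hΔaff ν x hx, hΔaff ν y hy]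
      field_simp
      ring
    simp only [hhdef]
    rcases Nat.even_or_odd ν with hν | hν
    · rw [hν.neg_one_pow] at h2 ⊢
      simp only [one_mul] at h2 ⊢
      linarith
    · rw [hν.neg_one_pow] at h2 ⊢
      simp only [neg_one_mul, neg_mul, neg_le_neg_iff] at h2 ⊢
      linarith [neg_eq_iff_eq_neg.mp h2.symm]
  have ha0 : a 0 = x₀ := by simp [hadef]
  have hΔx₀ : Δ x₀ = L * π / (2*((n:ℝ)+1)) := by
    have hm : x₀ ∈ Set.Icc (a 0) (a 1) := by
      rw [ha0]
      exact ⟨le_refl _, by simp only [hadef]; nlinarith⟩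
    rw [hΔaff 0 x₀ hm]
    simp only [pow_zero, Nat.cast_zero, zero_mul, sub_self, mul_zero, one_mul, zero_add, sub_zero]
    rw [div_mul_div_comm, mul_comm ((n:ℝ)+1) 2]
  have hx₀pos : 0 < h x₀ := by
    have hlt2 : L*π/(2*((n:ℝ)+1)) < f x₀ := by
      rw [div_lt_iff₀ (by positivity)]
      linarith
    simp only [hhdef]
    rw [hΔx₀]
    linarith
  have hΔper : ∀ x, Δ (x + 2*π) = Δ x := by
    intro x
    simp only [hΔdef]
    congr 1
    have e : ((n:ℝ)+1) * (x + 2*π - x₀) = ((n:ℝ)+1)*(x - x₀) + (((n:ℕ)+1 : ℤ):ℝ) * (2*π) := by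
      push_cast; ring
    rw [e, Real.cos_add_int_mul_two_pi]
  have hhperx : ∀ x, h (x + 2*π) = h x := by
    intro x
    simp only [hhdef]
    rw [hper x, hΔper x]
  -- sign points
  have Hc : ∀ ν : ℕ, ∃ y, y ∈ Set.Icc (a ν) (a (ν+1)) ∧
      (∀ x ∈ Set.Ico (a ν) y, (-1:ℝ)^ν * h x ≤ 0) ∧
      (∀ x ∈ Set.Ioc y (a (ν+1)), 0 ≤ (-1:ℝ)^ν * h x) := by
    intro ν
    obtain ⟨y, hy1, hy2, hy3⟩ := exists_sign_point (fun x => (-1:ℝ)^ν * h x) (a ν) (a (ν+1))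
      (hamono ν (ν+1) (Nat.le_succ ν)) (hmono ν)
    exact ⟨y, hy1, hy2, hy3⟩
  choose t htmem htleft htright using Hc
  set s : ℕ → ℝ := fun ν => if ν = 0 then x₀ else if ν ≤ 2*n then t ν else x₀ + 2*π with hsdef
  have hsmid : ∀ ν, 1 ≤ ν → ν ≤ 2*n → s ν = t ν := by
    intro ν h1 h2
    simp only [hsdef]
    rw [if_neg (by omega), if_pos h2]
  have ha2π : a (2*n+2) = x₀ + 2*π := by
    simp only [hadef]
    push_cast
    nlinarith [hcπ]
  have h2nc : ((2*n+1 : ℕ):ℝ) * c = 2*π - c := by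
    push_cast
    nlinarith [hcπ]
  have hs_lb : ∀ i, 1 ≤ i → i ≤ 2*n → a 1 ≤ s i := by
    intro i h1 h2
    rw [hsmid i h1 h2]
    exact le_trans (hamono 1 i h1) (htmem i).1
  have hs_ub : ∀ i, 1 ≤ i → i ≤ 2*n → s i ≤ x₀ + 2*π - c := by
    intro i h1 h2
    rw [hsmid i h1 h2]
    refine le_trans (htmem i).2 (le_trans (hamono (i+1) (2*n+1) (by omega)) ?_)
    simp only [hadef]
    rw [h2nc]
    linarith
  have hs0 : s 0 = x₀ := by simp [hsdef]
  have hstop : ∀ ν, 1 ≤ ν → 2*n < ν → s ν = x₀ + 2*π := by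
    intro ν h1 h2
    simp only [hsdef]
    rw [if_neg (by omega), if_neg (by omega)]
  have hsmono : Monotone s := by
    apply monotone_nat_of_le_succ
    intro ν
    rcases Nat.eq_zero_or_pos ν with rfl | hν
    · rw [hs0]
      by_cases h1 : 1 ≤ 2*n
      · rw [hsmid 1 le_rfl h1]
        refine le_trans ?_ (le_trans (hamono 0 1 (by omega)) (htmem 1).1)
        rw [ha0]
      · rw [hstop 1 le_rfl (by omega)]
        linarith
    · by_cases h2 : ν + 1 ≤ 2*n
      · rw [hsmid ν hν (by omega), hsmid (ν+1) (by omega) h2]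
        exact le_trans (htmem ν).2 (htmem (ν+1)).1
      · by_cases h3 : ν ≤ 2*n
        · rw [hsmid ν hν h3]
          simp only [hsdef]
          rw [if_neg (by omega), if_neg (by omega)]
          refine le_trans (htmem ν).2 (le_trans (hamono (ν+1) (2*n+2) (by omega)) ?_)
          rw [ha2π]
        · rw [hstop ν hν (by omega), hstop (ν+1) (by omega) (by omega)]
  set T : ℝ → ℝ := fun x => ∏ i ∈ Finset.Icc 1 (2*n), Real.sin ((x - s i)/2) with hTdef
  -- continuity
  have hcontΔ : Continuous Δ :=
    continuous_const.mul (Real.continuous_arcsin.comp (Real.continuous_cos.comp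
      (continuous_const.mul ((continuous_id.sub continuous_const)))))
  have hconth : Continuous h := (hreg.continuous).sub hcontΔ
  have hcontT : Continuous T := by
    apply continuous_finset_prod
    intro i _
    exact Real.continuous_sin.comp ((continuous_id.sub continuous_const).div_const 2)
  -- orthogonality of Δ
  have HΔorth : ∀ j : ℤ, |j| ≤ (n:ℤ) →
      (∫ x in (0:ℝ)..(2*π), (Δ x:ℂ) * Complex.exp ((j:ℂ) * x * Complex.I)) = 0 := by
    intro j hj
    set g : ℝ → ℂ := fun x => (Δ x:ℂ) * Complex.exp ((j:ℂ) * x * Complex.I) with hgdef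
    set q : ℂ := -Complex.exp ((j:ℂ) * (c:ℂ) * Complex.I) with hqdef
    have hΔanti : ∀ x, Δ (x + c) = - Δ x := by
      intro x
      simp only [hΔdef]
      have e : ((n:ℝ)+1) * (x + c - x₀) = ((n:ℝ)+1)*(x - x₀) + π := by
        rw [← hcπ]; ring
      rw [e, Real.cos_add_pi, Real.arcsin_neg]
      ring
    have hg : ∀ x, g (x + c) = q * g x := by
      intro x
      simp only [hgdef, hqdef]
      rw [hΔanti x]
      push_cast
      rw [show ((j:ℂ) * ((x:ℂ)+(c:ℂ)) * Complex.I) = (j:ℂ)*(x:ℂ)*Complex.I + (j:ℂ)*(c:ℂ)*Complex.I by ring,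
        Complex.exp_add]
      ring
    have hgc : Continuous g := by
      refine ((Complex.continuous_ofReal.comp hcontΔ)).mul (Complex.continuous_exp.comp ?_)
      exact (continuous_const.mul Complex.continuous_ofReal).mul continuous_const
    have h2π : ((2*n+2 : ℕ):ℝ) * c = 2*π := by
      push_cast
      nlinarith [hcπ]
    have hq1 : q ≠ 1 := by
      intro hq
      have hexp : Complex.exp ((j:ℂ) * (c:ℂ) * Complex.I) = -1 := by
        have := hqdef ▸ hq
        linear_combination -this
      have hcos : Real.cos ((j:ℝ) * c) = -1 := by
        have e1 : ((j:ℂ) * (c:ℂ) * Complex.I) = (((j:ℝ) * c : ℝ):ℂ) * Complex.I := by push_cast; ring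
        rw [e1] at hexp
        have := congrArg Complex.re hexp
        rwa [Complex.exp_ofReal_mul_I_re] at this
      have hcos1 : Real.cos ((j:ℝ) * c - π) = 1 := by
        rw [Real.cos_sub_pi]
        linarith
      obtain ⟨m, hm⟩ := (Real.cos_eq_one_iff _).mp hcos1
      have hj2 : (j:ℝ) * c = (2*(m:ℝ)+1) * π := by linarith
      have hj3 : (j:ℝ) = (2*(m:ℝ)+1) * ((n:ℝ)+1) := by
        have e4 : (j:ℝ) * c = ((2*(m:ℝ)+1) * ((n:ℝ)+1)) * c := by
          rw [hj2, ← hcπ]; ring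
        exact mul_right_cancel₀ (ne_of_gt hc) e4
      have hj4 : j = (2*m+1) * ((n:ℤ)+1) := by
        have : ((((2*m+1) * ((n:ℤ)+1)) : ℤ) : ℝ) = (2*(m:ℝ)+1) * ((n:ℝ)+1) := by push_cast; ring
        exact_mod_cast hj3.trans this.symm
      have habs : (n:ℤ) + 1 ≤ |j| := by
        rw [hj4, abs_mul]
        have h1 : (1:ℤ) ≤ |2*m+1| := by
          rcases le_or_gt 0 m with hm0 | hm0
          · rw [abs_of_nonneg (by omega)]; omega
          · rw [abs_of_neg (by omega)]; omega
        have h2 : |(n:ℤ)+1| = (n:ℤ)+1 := abs_of_nonneg (by omega)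
        nlinarith [abs_nonneg (2*m+1 : ℤ)]
      omega
    have hqN : q ^ (2*n+2) = 1 := by
      rw [hqdef, neg_pow, Even.neg_one_pow (⟨n+1, by ring⟩ : Even (2*n+2))]
      rw [← Complex.exp_nat_mul]
      have e : ((2*n+2 : ℕ):ℂ) * ((j:ℂ) * (c:ℂ) * Complex.I) = (j:ℂ) * (2*(π:ℂ) * Complex.I) := by
        have : ((2*n+2 : ℕ):ℂ) * (c:ℂ) = 2*(π:ℂ) := by
          have := h2π
          push_cast at this ⊢
          exact_mod_cast congrArg Complex.ofReal this
        calc ((2*n+2 : ℕ):ℂ) * ((j:ℂ) * (c:ℂ) * Complex.I)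
            = (j:ℂ) * (((2*n+2 : ℕ):ℂ) * (c:ℂ)) * Complex.I := by ring
          _ = (j:ℂ) * (2*(π:ℂ)) * Complex.I := by rw [this]
          _ = (j:ℂ) * (2*(π:ℂ) * Complex.I) := by ring
      rw [e, one_mul]
      exact_mod_cast Complex.exp_int_mul_two_pi_mul_I j
    have hsum : (∑ m ∈ Finset.range (2*n+2), q ^ m) = 0 := by
      rw [geom_sum_eq hq1, hqN]
      simp
    have := integral_smul_shift g c q hg hgc (2*n+2)
    rw [h2π, hsum, zero_mul] at this
    exact this
  -- orthogonality of h
  have Hh : ∀ j : ℤ, |j| ≤ (n:ℤ) →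
      (∫ x in (0:ℝ)..(2*π), (h x:ℂ) * Complex.exp ((j:ℂ) * x * Complex.I)) = 0 := by
    intro j hj
    have e : ∀ x : ℝ, (h x:ℂ) * Complex.exp ((j:ℂ) * x * Complex.I)
        = (f x:ℂ) * Complex.exp ((j:ℂ) * x * Complex.I)
          - (Δ x:ℂ) * Complex.exp ((j:ℂ) * x * Complex.I) := by
      intro x
      simp only [hhdef]
      push_cast
      ring
    rw [intervalIntegral.integral_congr (g := fun x => (f x:ℂ) * Complex.exp ((j:ℂ) * x * Complex.I)
      - (Δ x:ℂ) * Complex.exp ((j:ℂ) * x * Complex.I)) (fun x _ => e x)]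
    have hif : IntervalIntegrable (fun x : ℝ => (f x:ℂ) * Complex.exp ((j:ℂ) * x * Complex.I))
        volume 0 (2*π) := by
      apply Continuous.intervalIntegrable
      exact (Complex.continuous_ofReal.comp hreg.continuous).mul (Complex.continuous_exp.comp
        ((continuous_const.mul Complex.continuous_ofReal).mul continuous_const))
    have hiΔ : IntervalIntegrable (fun x : ℝ => (Δ x:ℂ) * Complex.exp ((j:ℂ) * x * Complex.I))
        volume 0 (2*π) := by
      apply Continuous.intervalIntegrable
      exact (Complex.continuous_ofReal.comp hcontΔ).mul (Complex.continuous_exp.comp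
        ((continuous_const.mul Complex.continuous_ofReal).mul continuous_const))
    rw [intervalIntegral.integral_sub hif hiΔ, horth j hj, HΔorth j hj, sub_zero]
  have Izero : (∫ x in (0:ℝ)..(2*π), h x * T x) = 0 := by
    simp only [hTdef]
    exact integral_mul_prod_sin n h hconth s Hh
  -- nonnegativity of h * T on [x₀, x₀ + 2π]
  have hTnonneg : ∀ x ∈ Set.Icc x₀ (x₀ + 2*π), 0 ≤ h x * T x := by
    intro x hx
    by_cases hxs : ∃ i, 1 ≤ i ∧ i ≤ 2*n ∧ x = s i
    · obtain ⟨i, hi1, hi2, rfl⟩ := hxs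
      have hT0 : T (s i) = 0 := by
        simp only [hTdef]
        apply Finset.prod_eq_zero (Finset.mem_Icc.mpr ⟨hi1, hi2⟩)
        simp
      rw [hT0, mul_zero]
    · push_neg at hxs
      set F := (Finset.Icc 1 (2*n)).filter (fun i => s i < x) with hFdef
      set j := F.card with hjdef
      have hjle : j ≤ 2*n := by
        rw [hjdef, hFdef]
        have h1 := Finset.card_filter_le (Finset.Icc 1 (2*n)) (fun i => s i < x)
        rw [Nat.card_Icc] at h1
        omega
      have hlow : ∀ i, 1 ≤ i → i ≤ j → s i < x := by
        intro i h1 h2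
        by_contra hcon
        push_neg at hcon
        have hsub : F ⊆ Finset.Icc 1 (i-1) := by
          intro m hm
          rw [hFdef, Finset.mem_filter, Finset.mem_Icc] at hm
          rw [Finset.mem_Icc]
          refine ⟨hm.1.1, ?_⟩
          by_contra hmi
          push_neg at hmi
          have : s i ≤ s m := hsmono (by omega)
          linarith [hm.2]
        have := Finset.card_le_card hsub
        rw [Nat.card_Icc] at this
        omega
      have hhigh : ∀ i, j + 1 ≤ i → i ≤ 2*n → x < s i := by
        intro i h1 h2
        by_contra hcon
        push_neg at hcon
        have hne : x ≠ s i := hxs i (by omega) h2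
        have hlt' : s i < x := lt_of_le_of_ne hcon (fun e2 => hne e2.symm)
        have hsub : Finset.Icc 1 i ⊆ F := by
          intro m hm
          rw [Finset.mem_Icc] at hm
          rw [hFdef, Finset.mem_filter, Finset.mem_Icc]
          exact ⟨⟨hm.1, le_trans hm.2 h2⟩, lt_of_le_of_lt (hsmono hm.2) hlt'⟩
        have := Finset.card_le_card hsub
        rw [Nat.card_Icc] at this
        omega
      -- Claim A
      have hIoc1 : Finset.Ioc 0 (2*n) = Finset.Icc 1 (2*n) := by
        ext m; rw [Finset.mem_Ioc, Finset.mem_Icc]; omega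
      have hIoc2 : Finset.Ioc 0 j = Finset.Icc 1 j := by
        ext m; rw [Finset.mem_Ioc, Finset.mem_Icc]; omega
      have hIoc3 : Finset.Ioc j (2*n) = Finset.Icc (j+1) (2*n) := by
        ext m; rw [Finset.mem_Ioc, Finset.mem_Icc]; omega
      have hsplit : (∏ i ∈ Finset.Icc 1 j, Real.sin ((x - s i)/2))
          * (∏ i ∈ Finset.Icc (j+1) (2*n), Real.sin ((x - s i)/2)) = T x := by
        simp only [hTdef]
        rw [← hIoc1, ← hIoc2, ← hIoc3]
        exact Finset.prod_Ioc_consecutive _ (Nat.zero_le j) hjle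
      have hpos1 : 0 < ∏ i ∈ Finset.Icc 1 j, Real.sin ((x - s i)/2) := by
        apply Finset.prod_pos
        intro i hi
        rw [Finset.mem_Icc] at hi
        apply Real.sin_pos_of_pos_of_lt_pi
        · have := hlow i hi.1 hi.2
          linarith
        · have h1 := hs_lb i hi.1 (le_trans hi.2 hjle)
          simp only [hadef] at h1
          have h2 := hx.2
          push_cast at h1
          linarith
      have hpos2 : 0 < ∏ i ∈ Finset.Icc (j+1) (2*n), (-(Real.sin ((x - s i)/2))) := by
        apply Finset.prod_pos
        intro i hi
        rw [Finset.mem_Icc] at hi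
        rw [neg_pos]
        apply Real.sin_neg_of_neg_of_neg_pi_lt
        · have := hhigh i hi.1 hi.2
          linarith
        · have h1 := hs_ub i (by omega) hi.2
          have h2 := hx.1
          linarith
      have hcard3 : (Finset.Icc (j+1) (2*n)).card = 2*n - j := by
        rw [Nat.card_Icc]; omega
      have hClaimA : 0 ≤ (-1:ℝ)^j * T x := by
        rw [← hsplit, prod_eq_neg_one_pow_card_mul (Finset.Icc (j+1) (2*n)), hcard3]
        have e1 : (-1:ℝ)^j * ((∏ i ∈ Finset.Icc 1 j, Real.sin ((x - s i)/2)) *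
            ((-1:ℝ)^(2*n-j) * ∏ i ∈ Finset.Icc (j+1) (2*n), (-(Real.sin ((x - s i)/2)))))
            = ((-1:ℝ)^j * (-1:ℝ)^(2*n-j)) * ((∏ i ∈ Finset.Icc 1 j, Real.sin ((x - s i)/2)) *
              ∏ i ∈ Finset.Icc (j+1) (2*n), (-(Real.sin ((x - s i)/2)))) := by ring
        rw [e1, ← pow_add, show j + (2*n - j) = 2*n by omega,
          Even.neg_one_pow (even_two_mul n), one_mul]
        positivity
      -- Claim B
      have hClaimB : 0 ≤ (-1:ℝ)^j * h x := by
        by_cases hxa : x ≤ a (j+1)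
        · by_cases hj0 : j = 0
          · rw [hj0] at hxa ⊢
            simp only [pow_zero, one_mul]
            have hm := hmono 0 x₀ (by rw [ha0]; exact ⟨le_refl _, hamono 0 1 (by omega) |>.trans_eq' ha0⟩)
              x ⟨by rw [ha0]; exact hx.1, hxa⟩ hx.1
            simp only [pow_zero, one_mul] at hm
            linarith [hx₀pos]
          · have h1 : 1 ≤ j := by omega
            have hsj : s j = t j := hsmid j h1 hjle
            have := htright j x ⟨by rw [← hsj]; exact hlow j h1 (le_refl j), hxa⟩
            exact this
        · push_neg at hxa
          by_cases hj2n : j = 2*n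
          · rw [hj2n] at hxa ⊢
            have hx2 : x ∈ Set.Icc (a (2*n+1)) (a (2*n+2)) := ⟨le_of_lt hxa, by rw [ha2π]; exact hx.2⟩
            have hx₀2 : x₀ + 2*π ∈ Set.Icc (a (2*n+1)) (a (2*n+2)) := by
              constructor
              · rw [← ha2π]; exact hamono (2*n+1) (2*n+2) (by omega)
              · rw [ha2π]
            have hm := hmono (2*n+1) x hx2 (x₀ + 2*π) hx₀2 hx.2
            rw [Odd.neg_one_pow (odd_two_mul_add_one n)] at hm
            rw [hhperx x₀] at hm
            simp only [neg_one_mul, neg_le_neg_iff] at hm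
            rw [Even.neg_one_pow (even_two_mul n), one_mul]
            linarith [hx₀pos]
          · have h1 : j + 1 ≤ 2*n := by omega
            have hsj : s (j+1) = t (j+1) := hsmid (j+1) (by omega) h1
            have hxlt : x < t (j+1) := by rw [← hsj]; exact hhigh (j+1) (le_refl _) h1
            have := htleft (j+1) x ⟨le_of_lt hxa, hxlt⟩
            rw [pow_succ] at this
            nlinarith [this]
      have e2 : ((-1:ℝ)^j * h x) * ((-1:ℝ)^j * T x) = h x * T x := by
        have e3 : ((-1:ℝ)^j) * ((-1:ℝ)^j) = 1 := by
          rw [← pow_add]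
          exact Even.neg_one_pow ⟨j, rfl⟩
        calc ((-1:ℝ)^j * h x) * ((-1:ℝ)^j * T x)
            = (((-1:ℝ)^j) * ((-1:ℝ)^j)) * (h x * T x) := by ring
          _ = h x * T x := by rw [e3, one_mul]
      have := mul_nonneg hClaimB hClaimA
      linarith [e2 ▸ this]
  -- positivity on the middle interval
  have hmid : ∀ x ∈ Set.Ioo (x₀ + c/3) (x₀ + c/2), 0 < h x * T x := by
    intro x hx
    have hxmem : x ∈ Set.Icc (a 0) (a 1) := by
      constructor
      · rw [ha0]; linarith [hx.1]
      · simp only [hadef]; push_cast; linarith [hx.2]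
    have hhx : 0 < h x := by
      have hm := hmono 0 x₀ (by rw [ha0]; refine ⟨le_refl _, ?_⟩; simp only [hadef]; nlinarith)
        x hxmem (by linarith [hx.1])
      simp only [pow_zero, one_mul] at hm
      linarith [hx₀pos]
    have hTx : 0 < T x := by
      have eT : T x = (-1:ℝ)^((Finset.Icc 1 (2*n)).card)
          * ∏ i ∈ Finset.Icc 1 (2*n), (-(Real.sin ((x - s i)/2))) := by
        simp only [hTdef]
        exact prod_eq_neg_one_pow_card_mul _ _
      rw [eT, Nat.card_Icc, show 2*n+1-1 = 2*n by omega, Even.neg_one_pow (even_two_mul n), one_mul]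
      apply Finset.prod_pos
      intro i hi
      rw [Finset.mem_Icc] at hi
      rw [neg_pos]
      apply Real.sin_neg_of_neg_of_neg_pi_lt
      · have h1 := hs_lb i hi.1 hi.2
        simp only [hadef] at h1
        push_cast at h1
        have := hx.2
        linarith
      · have h1 := hs_ub i hi.1 hi.2
        have := hx.1
        linarith
    exact mul_pos hhx hTx
  -- integral assembly
  have hHT : Function.Periodic (fun x => h x * T x) (2*π) := by
    intro x
    have hTper : T (x + 2*π) = T x := by
      have e1 : ∀ i ∈ Finset.Icc 1 (2*n), -(Real.sin ((x + 2*π - s i)/2)) = Real.sin ((x - s i)/2) := by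
        intro i _
        have e2 : (x + 2*π - s i)/2 = (x - s i)/2 + π := by ring
        rw [e2, Real.sin_add_pi]
        ring
      simp only [hTdef]
      rw [prod_eq_neg_one_pow_card_mul (Finset.Icc 1 (2*n)) (fun i => Real.sin ((x + 2*π - s i)/2)),
        Finset.prod_congr rfl e1, Nat.card_Icc, show 2*n+1-1 = 2*n by omega,
        Even.neg_one_pow (even_two_mul n), one_mul]
    simp only []
    rw [hhperx x, hTper]
  have hIint : ∀ A B : ℝ, IntervalIntegrable (fun x => h x * T x) volume A B :=
    fun A B => (hconth.mul hcontT).intervalIntegrable A B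
  have hstep : (∫ x in x₀..(x₀ + 2*π), h x * T x) = 0 := by
    have := hHT.intervalIntegral_add_eq x₀ 0
    rw [zero_add] at this
    rw [this]
    exact Izero
  have hcle : c ≤ π := by
    rw [hcdef]
    apply div_le_self hπ.le
    linarith [Nat.cast_nonneg (α := ℝ) n]
  have hi1 : 0 ≤ ∫ x in x₀..(x₀ + c/3), h x * T x := by
    apply intervalIntegral.integral_nonneg (by linarith)
    intro u hu
    exact hTnonneg u ⟨hu.1, by linarith [hu.2]⟩
  have hi3 : 0 ≤ ∫ x in (x₀ + c/2)..(x₀ + 2*π), h x * T x := by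
    apply intervalIntegral.integral_nonneg (by linarith)
    intro u hu
    exact hTnonneg u ⟨by linarith [hu.1], hu.2⟩
  have hi2 : 0 < ∫ x in (x₀ + c/3)..(x₀ + c/2), h x * T x :=
    intervalIntegral.intervalIntegral_pos_of_pos_on (hIint _ _) hmid (by linarith)
  have hadd1 : (∫ x in x₀..(x₀ + c/2), h x * T x)
      = (∫ x in x₀..(x₀ + c/3), h x * T x) + ∫ x in (x₀ + c/3)..(x₀ + c/2), h x * T x :=
    (integral_add_adjacent_intervals (hIint _ _) (hIint _ _)).symm
  have hadd2 : (∫ x in x₀..(x₀ + 2*π), h x * T x)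
      = (∫ x in x₀..(x₀ + c/2), h x * T x) + ∫ x in (x₀ + c/2)..(x₀ + 2*π), h x * T x :=
    (integral_add_adjacent_intervals (hIint _ _) (hIint _ _)).symm
  rw [hadd2, hadd1] at hstep
  linarith

set_option maxHeartbeats 1000000 in
/-- **Reverse Bernstein inequality, first derivative.**
For every 2π-periodic C¹ function `f` whose Fourier coefficients vanish for all
frequencies `j` with `|j| ≤ k − 1`, one has `‖f'‖_∞ ≥ (2k/π)·‖f‖_∞`. -/
theorem reverse_bernstein_first_derivative
    (k : ℕ) (hk : 1 ≤ k) (f : ℝ → ℝ)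
    (hper : Function.Periodic f (2 * π))
    (hreg : ContDiff ℝ 1 f)
    (horth : ∀ j : ℤ, |j| ≤ (k : ℤ) - 1 →
      (∫ x in (0:ℝ)..(2 * π), (f x : ℂ) * Complex.exp (-Complex.I * j * x)) = 0) :
    (2 * k / π) * (⨆ x : ℝ, |f x|) ≤ ⨆ x : ℝ, |deriv f x| := by
  obtain ⟨n, rfl⟩ : ∃ n, k = n + 1 := ⟨k - 1, by omega⟩
  have hπ := Real.pi_pos
  set M := ⨆ x : ℝ, |f x| with hM
  set L := ⨆ x : ℝ, |deriv f x| with hL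
  by_contra hcon
  push_neg at hcon
  push_cast at hcon
  have hdc : Continuous (deriv f) := hreg.continuous_deriv le_rfl
  have hdper : Function.Periodic (fun x => |deriv f x|) (2*π) := by
    intro x
    simp only
    congr 1
    have e1 : deriv (fun y => f (y + 2*π)) x = deriv f (x + 2*π) := deriv_comp_add_const f (2*π) x
    rw [← e1]
    congr 1
    funext y
    exact hper y
  have hbdd : BddAbove (Set.range fun x => |deriv f x|) := by
    have hcomp : IsCompact ((fun x => |deriv f x|) '' Set.Icc 0 (2*π)) :=
      (isCompact_Icc).image (hdc.abs)
    refine hcomp.bddAbove.mono ?_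
    rintro y ⟨x, rfl⟩
    obtain ⟨z, hz, he⟩ := hdper.exists_mem_Ico₀ (by positivity) x
    exact ⟨z, Set.Ico_subset_Icc_self hz, he.symm⟩
  have hLb : ∀ x, |deriv f x| ≤ L := fun x => le_ciSup hbdd x
  have hL0 : 0 ≤ L := le_trans (abs_nonneg _) (hLb 0)
  have hMgt : L * π / (2*((n:ℝ)+1)) < M := by
    rw [div_lt_iff₀ (by positivity)]
    have h2 := mul_lt_mul_of_pos_right hcon hπ
    have e : 2 * ((n:ℝ)+1) / π * M * π = 2*((n:ℝ)+1)*M := by field_simp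
    rw [e] at h2
    nlinarith
  obtain ⟨x₀, hx₀⟩ := exists_lt_of_lt_ciSup hMgt
  have horthP : ∀ j : ℤ, |j| ≤ (n:ℤ) →
      (∫ x in (0:ℝ)..(2*π), (f x:ℂ) * Complex.exp ((j:ℂ) * x * Complex.I)) = 0 := by
    intro j hj
    have h1 := horth (-j) (by rw [abs_neg]; push_cast; omega)
    rw [← h1]
    apply intervalIntegral.integral_congr
    intro x _
    congr 1
    push_cast
    ring
  rcases le_or_gt 0 (f x₀) with hsgn | hsgn
  · rw [abs_of_nonneg hsgn] at hx₀
    rw [div_lt_iff₀ (by positivity)] at hx₀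
    exact bohr_key n f x₀ L hper hreg horthP hLb (by nlinarith)
  · rw [abs_of_neg hsgn] at hx₀
    rw [div_lt_iff₀ (by positivity)] at hx₀
    refine bohr_key n (fun x => - f x) x₀ L ?_ hreg.neg ?_ ?_ (by nlinarith)
    · intro x; simp only; rw [hper x]
    · intro j hj
      have h1 := horthP j hj
      have e : ∀ x : ℝ, ((-f x : ℝ):ℂ) * Complex.exp ((j:ℂ) * x * Complex.I)
          = -((f x:ℂ) * Complex.exp ((j:ℂ) * x * Complex.I)) := by
        intro x; push_cast; ring
      rw [intervalIntegral.integral_congr (g := fun x =>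
        -((f x:ℂ) * Complex.exp ((j:ℂ) * x * Complex.I))) (fun x _ => e x),
        intervalIntegral.integral_neg, h1, neg_zero]
    · intro x
      have e : deriv (fun x => -f x) x = - deriv f x := deriv.neg
      rw [e, abs_neg]
      exact hLb x
end

section
/- For every 2π-periodic C¹ function f with zero mean (∫₀^{2π} f = 0), ‖f'‖_∞ ≥ (2/π)·‖f‖_∞, and the constant 2/π is optimal: the 2π-periodic triangular wave c(x) = π/2 − d(x,0) (with d the angular distance) saturates the inequality. -/
open Real MeasureTheory intervalIntegral

/-- The triangular cosine `c(x) = π/2 − d(x,0)`, where `d` is the angular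
distance on `ℝ/2πℤ`. -/
noncomputable def tri (x : ℝ) : ℝ := π / 2 - |x - 2 * π * round (x / (2 * π))|

lemma rb_bdd_abs {g : ℝ → ℝ} (hg : Continuous g) (hp : Function.Periodic g (2 * π)) :
    BddAbove (Set.range fun x => |g x|) := by
  obtain ⟨C, hC⟩ := (isCompact_Icc (a := (0:ℝ)) (b := 2 * π)).bddAbove_image
    (hg.abs.continuousOn)
  refine ⟨C, ?_⟩
  rintro _ ⟨x, rfl⟩
  obtain ⟨y, hy, hxy⟩ := hp.exists_mem_Ico₀ (by positivity) x
  show |g x| ≤ C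
  rw [hxy]
  exact hC ⟨y, ⟨hy.1, hy.2.le⟩, rfl⟩

lemma rb_int_abs (x₀ : ℝ) : (∫ x in (x₀ - π)..(x₀ + π), |x - x₀|) = π ^ 2 := by
  have h := intervalIntegral.integral_comp_sub_right (a := x₀ - π) (b := x₀ + π)
    (fun t : ℝ => |t|) x₀
  rw [h]
  have e1 : (x₀ - π - x₀ : ℝ) = -π := by ring
  have e2 : (x₀ + π - x₀ : ℝ) = π := by ring
  rw [e1, e2]
  have i1 : IntervalIntegrable (fun t : ℝ => |t|) volume (-π) 0 :=
    (continuous_abs).intervalIntegrable _ _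
  have i2 : IntervalIntegrable (fun t : ℝ => |t|) volume 0 π :=
    (continuous_abs).intervalIntegrable _ _
  rw [← intervalIntegral.integral_add_adjacent_intervals i1 i2]
  have c1 : (∫ t in (-π : ℝ)..0, |t|) = ∫ t in (-π : ℝ)..0, -t := by
    apply intervalIntegral.integral_congr
    intro t ht
    rw [Set.uIcc_of_le (by linarith [pi_pos] : (-π : ℝ) ≤ 0)] at ht
    exact abs_of_nonpos ht.2
  have c2 : (∫ t in (0 : ℝ)..π, |t|) = ∫ t in (0 : ℝ)..π, t := by
    apply intervalIntegral.integral_congr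
    intro t ht
    rw [Set.uIcc_of_le pi_pos.le] at ht
    exact abs_of_nonneg ht.1
  rw [c1, c2, intervalIntegral.integral_neg, integral_id, integral_id]
  ring

/-- Key estimate: if `|f'| ≤ M` everywhere and `f` is periodic with zero mean,
then `2π f(x₀) ≤ π² M`. -/
lemma rb_key {f : ℝ → ℝ} (hf : ContDiff ℝ 1 f) (hp : Function.Periodic f (2 * π))
    (hmean : (∫ x in (0:ℝ)..(2 * π), f x) = 0) {M : ℝ}
    (hM : ∀ x, |deriv f x| ≤ M) (x₀ : ℝ) : 2 * π * f x₀ ≤ π ^ 2 * M := by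
  have hdf : Differentiable ℝ f := hf.differentiable one_ne_zero
  have hcont : Continuous f := hf.continuous
  -- the integral of f over [x₀ - π, x₀ + π] is zero
  have hint : (∫ x in (x₀ - π)..(x₀ + π), f x) = 0 := by
    have := hp.intervalIntegral_add_eq (x₀ - π) 0
    simp only [zero_add] at this
    rw [show x₀ + π = x₀ - π + 2 * π by ring, this, hmean]
  -- lower bound f by the tent function
  have hlb : ∀ x, f x₀ - M * |x - x₀| ≤ f x := by
    intro x
    have := Convex.norm_image_sub_le_of_norm_deriv_le (s := Set.univ)
      (fun y _ => hdf y) (fun y _ => hM y) convex_univ (Set.mem_univ x) (Set.mem_univ x₀)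
    rw [Real.norm_eq_abs, Real.norm_eq_abs, abs_sub_comm (x₀ : ℝ) x] at this
    have h2 := (abs_le.mp this).2
    linarith
  have hab : x₀ - π ≤ x₀ + π := by linarith [pi_pos]
  have hi1 : IntervalIntegrable (fun x => f x₀ - M * |x - x₀|) volume (x₀ - π) (x₀ + π) := by
    apply Continuous.intervalIntegrable
    continuity
  have hi2 : IntervalIntegrable f volume (x₀ - π) (x₀ + π) :=
    hcont.intervalIntegrable _ _
  have hmono := intervalIntegral.integral_mono_on hab hi1 hi2 (fun x _ => hlb x)
  rw [hint] at hmono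
  have hcalc : (∫ x in (x₀ - π)..(x₀ + π), (f x₀ - M * |x - x₀|))
      = 2 * π * f x₀ - M * π ^ 2 := by
    rw [intervalIntegral.integral_sub (by apply Continuous.intervalIntegrable; continuity)
      (by apply Continuous.intervalIntegrable; continuity),
      intervalIntegral.integral_const, intervalIntegral.integral_const_mul, rb_int_abs]
    rw [smul_eq_mul]
    ring
  rw [hcalc] at hmono
  linarith

lemma rb_abs_sub_round_le (x : ℝ) : |x - 2 * π * round (x / (2 * π))| ≤ π := by
  have h2p : (0:ℝ) < 2 * π := by positivity
  have h := abs_sub_round (x / (2 * π))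
  have heq : x - 2 * π * (round (x / (2 * π)) : ℝ) = 2 * π * (x / (2 * π) - (round (x / (2 * π)) : ℝ)) := by
    field_simp
  rw [heq, abs_mul, abs_of_pos h2p]
  nlinarith [pi_pos]

lemma rb_round_eq {n : ℤ} {t : ℝ} (h : |t - n| < 1 / 2) : round t = n := by
  rw [round_eq, Int.floor_eq_iff]
  rw [abs_lt] at h
  constructor <;> · push_cast; linarith [h.1, h.2]

/-- **Reverse Bernstein inequality for zero-mean functions, with sharpness.**
Every 2π-periodic C¹ function with zero mean satisfies `‖f'‖_∞ ≥ (2/π)·‖f‖_∞`,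
and the triangular wave `c(x) = π/2 − d(x,0)` saturates the inequality:
`‖c‖_∞ = π/2` while `|c'| = 1` almost everywhere. -/
theorem reverse_bernstein_k_one_sharp :
    (∀ f : ℝ → ℝ, Function.Periodic f (2 * π) → ContDiff ℝ 1 f →
      (∫ x in (0:ℝ)..(2 * π), f x) = 0 →
      (2 / π) * (⨆ x : ℝ, |f x|) ≤ ⨆ x : ℝ, |deriv f x|) ∧
    (⨆ x : ℝ, |tri x|) = π / 2 ∧
    (∀ᵐ x : ℝ ∂volume, |deriv tri x| = 1) := by
  refine ⟨?_, ?_, ?_⟩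
  · -- the inequality
    intro f hp hf hmean
    set M := ⨆ x : ℝ, |deriv f x| with hMdef
    have hdc : Continuous (deriv f) := hf.continuous_deriv le_rfl
    have hdp : Function.Periodic (deriv f) (2 * π) := by
      intro x
      have h1 : deriv (fun y => f (y + 2 * π)) x = deriv f (x + 2 * π) :=
        deriv_comp_add_const f (2 * π) x
      have h2 : (fun y => f (y + 2 * π)) = f := funext hp
      rw [h2] at h1
      exact h1.symm
    have hbdd : BddAbove (Set.range fun x => |deriv f x|) := rb_bdd_abs hdc hdp
    have hM : ∀ x, |deriv f x| ≤ M := fun x => le_ciSup hbdd x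
    have hπ : (0:ℝ) < π := pi_pos
    have hsup : (⨆ x : ℝ, |f x|) ≤ π / 2 * M := by
      apply ciSup_le
      intro x
      have h1 : 2 * π * f x ≤ π ^ 2 * M := rb_key hf hp hmean hM x
      have h2 : 2 * π * (-f x) ≤ π ^ 2 * M := by
        have hp' : Function.Periodic (fun y => -f y) (2 * π) := fun y => by simp [hp y]
        have hf' : ContDiff ℝ 1 (fun y => -f y) := hf.neg
        have hmean' : (∫ x in (0:ℝ)..(2 * π), -f x) = 0 := by
          rw [intervalIntegral.integral_neg, hmean, neg_zero]
        have hM' : ∀ y, |deriv (fun z => -f z) y| ≤ M := by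
          intro y
          rw [deriv.fun_neg, abs_neg]
          exact hM y
        exact rb_key hf' hp' hmean' hM' x
      rw [abs_le]
      constructor <;> nlinarith
    calc (2 / π) * (⨆ x : ℝ, |f x|) ≤ (2 / π) * (π / 2 * M) := by
          apply mul_le_mul_of_nonneg_left hsup (by positivity)
      _ = M := by field_simp
  · -- sup of |tri| is π/2
    have hb : ∀ x, |tri x| ≤ π / 2 := by
      intro x
      have h1 := rb_abs_sub_round_le x
      have h2 : (0:ℝ) ≤ |x - 2 * π * round (x / (2 * π))| := abs_nonneg _
      rw [tri, abs_le]
      constructor <;> linarith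
    apply le_antisymm
    · exact ciSup_le hb
    · have h0 : tri 0 = π / 2 := by
        simp [tri]
      calc π / 2 = |tri 0| := by rw [h0, abs_of_pos (by positivity)]
        _ ≤ ⨆ x : ℝ, |tri x| := le_ciSup (f := fun x : ℝ => |tri x|) ⟨π / 2, by rintro _ ⟨x, rfl⟩; exact hb x⟩ (0 : ℝ)
  · -- |tri'| = 1 a.e.
    have hπ : (0:ℝ) < π := pi_pos
    have hcount : (volume {x : ℝ | ∃ n : ℤ, x = n * π}) = 0 := by
      apply Set.Countable.measure_zero
      have : {x : ℝ | ∃ n : ℤ, x = n * π} = Set.range (fun n : ℤ => (n:ℝ) * π) := by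
        ext x; simp [eq_comm]
      rw [this]
      exact Set.countable_range _
    rw [MeasureTheory.ae_iff]
    refine measure_mono_null ?_ hcount
    intro x hx
    simp only [Set.mem_setOf_eq] at hx ⊢
    by_contra hne
    push_neg at hne
    apply hx
    -- x is not a multiple of π; show |deriv tri x| = 1
    set n : ℤ := round (x / (2 * π)) with hn
    have hu : x - 2 * π * n ≠ 0 := by
      intro h
      refine hne (2 * n) ?_
      push_cast
      linear_combination h
    have hstrict : |x / (2 * π) - n| < 1 / 2 := by
      rcases lt_or_eq_of_le (abs_sub_round (x / (2 * π))) with h | h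
      · exact h
      · exfalso
        rcases abs_eq (by norm_num : (0:ℝ) ≤ 1/2) |>.mp h with h' | h'
        · refine hne (2 * n + 1) ?_
          have h2 : x = ((n : ℝ) + 1 / 2) * (2 * π) := by
            rw [← div_eq_iff (by positivity : (2 * π : ℝ) ≠ 0)]
            linarith
          push_cast
          linear_combination h2
        · refine hne (2 * n - 1) ?_
          have h2 : x = ((n : ℝ) - 1 / 2) * (2 * π) := by
            rw [← div_eq_iff (by positivity : (2 * π : ℝ) ≠ 0)]
            linarith
          push_cast
          linear_combination h2
    -- eventually round (y / (2π)) = n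
    have hev : ∀ᶠ y in nhds x, tri y = π / 2 - |y - 2 * π * n| := by
      have hcont : Filter.Tendsto (fun y : ℝ => |y / (2 * π) - n|) (nhds x)
          (nhds |x / (2 * π) - n|) := by
        apply Continuous.tendsto
        continuity
      filter_upwards [hcont.eventually_lt_const hstrict] with y hy
      rw [tri, rb_round_eq hy]
    rcases hu.lt_or_gt with hlt | hlt
    · -- x - 2πn < 0 : slope +1
      have hev2 : ∀ᶠ y in nhds x, y - 2 * π * n < 0 := by
        have : Filter.Tendsto (fun y : ℝ => y - 2 * π * n) (nhds x) (nhds (x - 2 * π * n)) := by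
          apply Continuous.tendsto; continuity
        exact this.eventually_lt_const hlt
      have heq : ∀ᶠ y in nhds x, tri y = π / 2 + (y - 2 * π * n) := by
        filter_upwards [hev, hev2] with y h1 h2
        rw [h1, abs_of_neg h2]; ring
      have hd : HasDerivAt (fun y : ℝ => π / 2 + (y - 2 * π * n)) 1 x := by
        simpa using (HasDerivAt.const_add (π / 2) ((hasDerivAt_id x).sub_const (2 * π * n)))
      have : HasDerivAt tri 1 x := hd.congr_of_eventuallyEq heq
      rw [this.deriv]
      norm_num
    · -- x - 2πn > 0 : slope −1
      have hev2 : ∀ᶠ y in nhds x, 0 < y - 2 * π * n := by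
        have : Filter.Tendsto (fun y : ℝ => y - 2 * π * n) (nhds x) (nhds (x - 2 * π * n)) := by
          apply Continuous.tendsto; continuity
        exact this.eventually_const_lt hlt
      have heq : ∀ᶠ y in nhds x, tri y = π / 2 - (y - 2 * π * n) := by
        filter_upwards [hev, hev2] with y h1 h2
        rw [h1, abs_of_pos h2]
      have hd : HasDerivAt (fun y : ℝ => π / 2 - (y - 2 * π * n)) (-1) x := by
        simpa using (HasDerivAt.const_sub (π / 2) ((hasDerivAt_id x).sub_const (2 * π * n)))
      have : HasDerivAt tri (-1) x := hd.congr_of_eventuallyEq heq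
      rw [this.deriv]
      norm_num
end

section
/- Let k ≥ 1 and let p be an odd real trigonometric polynomial of degree ≤ k. Then the set Z of zeros on S¹ of J₁ − p, where J₁(x) = x on (−π,π) and J₁(π) := 0 (with the convention that π ∈ Z iff p(π) = 0), has cardinality at most 2k + 2. -/
open Real MeasureTheory intervalIntegral

/-- An odd real trigonometric polynomial of degree at most `n`:
a real linear combination of `sin(jx)`, `1 ≤ j ≤ n`. -/
def IsOddTrigPoly (n : ℕ) (p : ℝ → ℝ) : Prop :=
  ∃ b : ℕ → ℝ, ∀ x : ℝ, p x = ∑ j ∈ Finset.range (n + 1), b j * Real.sin (j * x)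

/-- Rolle-type counting: the number of zeros of a differentiable function in an
interval is at most one more than the number of zeros of its derivative. -/
lemma card_le_of_rolle {f : ℝ → ℝ} (hf : Differentiable ℝ f) {a b : ℝ}
    (T : Finset ℝ) (hT : ∀ x ∈ T, x ∈ Set.Ioo a b ∧ f x = 0)
    (D : Finset ℝ) (hD : ∀ x ∈ Set.Ioo a b, deriv f x = 0 → x ∈ D) :
    T.card ≤ D.card + 1 := by
  rcases Nat.eq_zero_or_pos T.card with h0 | hpos
  · omega
  obtain ⟨m, hm⟩ : ∃ m, T.card = m + 1 := ⟨T.card - 1, by omega⟩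
  suffices h : m ≤ D.card by omega
  set σ := T.orderIsoOfFin hm with hσ
  have hmemT : ∀ i : Fin (m+1), ((σ i : ℝ) ∈ Set.Ioo a b ∧ f (σ i) = 0) :=
    fun i => hT _ (σ i).2
  have key : ∀ i : Fin m, ∃ c, c ∈ Set.Ioo ((σ i.castSucc : ℝ)) ((σ i.succ : ℝ)) ∧
      deriv f c = 0 := by
    intro i
    have hlt : ((σ i.castSucc : ℝ)) < ((σ i.succ : ℝ)) := by
      exact_mod_cast σ.strictMono (Fin.castSucc_lt_succ (i := i))
    have heq : f (σ i.castSucc) = f (σ i.succ) := by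
      rw [(hmemT i.castSucc).2, (hmemT i.succ).2]
    obtain ⟨c, hc1, hc2⟩ := exists_deriv_eq_zero hlt hf.continuous.continuousOn heq
    exact ⟨c, hc1, hc2⟩
  choose c hc1 hc2 using key
  have hcab : ∀ i, c i ∈ Set.Ioo a b := by
    intro i
    exact ⟨lt_trans (hmemT i.castSucc).1.1 (hc1 i).1,
      lt_trans (hc1 i).2 (hmemT i.succ).1.2⟩
  have hmono : StrictMono c := by
    intro i j hij
    calc c i < (σ i.succ : ℝ) := (hc1 i).2
      _ ≤ (σ j.castSucc : ℝ) := by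
          exact_mod_cast σ.monotone (Fin.succ_le_castSucc_iff.2 hij)
      _ < c j := (hc1 j).1
  have : Function.Injective (fun i : Fin m => (⟨c i, hD _ (hcab i) (hc2 i)⟩ : D)) := by
    intro i j h
    exact hmono.injective (congrArg Subtype.val h)
  simpa using Fintype.card_le_of_injective _ this

/-- Zeros of `1 - ∑ j b j cos(jx)` on `(−π, π]` are finite, at most `2k` of them. -/
lemma trig_deriv_zeros (k : ℕ) (b : ℕ → ℝ) :
    ({x ∈ Set.Ioc (-π) π |
        (1:ℝ) - ∑ j ∈ Finset.range (k+1), (j:ℝ) * b j * Real.cos (j*x) = 0}).Finite ∧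
    ({x ∈ Set.Ioc (-π) π |
        (1:ℝ) - ∑ j ∈ Finset.range (k+1), (j:ℝ) * b j * Real.cos (j*x) = 0}).ncard ≤ 2*k := by
  classical
  set S := {x ∈ Set.Ioc (-π) π |
      (1:ℝ) - ∑ j ∈ Finset.range (k+1), (j:ℝ) * b j * Real.cos (j*x) = 0} with hS
  set Q : Polynomial ℂ := Polynomial.X ^ k -
      ∑ j ∈ Finset.range (k+1), Polynomial.C (((j:ℝ) * b j / 2 : ℝ) : ℂ) *
        (Polynomial.X ^ (k+j) + Polynomial.X ^ (k-j)) with hQ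
  have hcoeff : Q.coeff k = 1 := by
    rw [hQ, Polynomial.coeff_sub, Polynomial.finset_sum_coeff]
    have h1 : (Polynomial.X ^ k : Polynomial ℂ).coeff k = 1 := by
      simp [Polynomial.coeff_X_pow]
    rw [h1]
    have h2 : ∀ j ∈ Finset.range (k+1),
        (Polynomial.C (((j:ℝ) * b j / 2 : ℝ) : ℂ) *
          (Polynomial.X ^ (k+j) + Polynomial.X ^ (k-j))).coeff k = 0 := by
      intro j hj
      rcases Nat.eq_zero_or_pos j with rfl | hjpos
      · simp
      · rw [Polynomial.coeff_C_mul, Polynomial.coeff_add, Polynomial.coeff_X_pow,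
          Polynomial.coeff_X_pow]
        have hjk : j ≤ k := by simpa using Nat.lt_succ_iff.1 (Finset.mem_range.1 hj)
        have : k ≠ k + j := by omega
        have : k ≠ k - j := by omega
        simp_all
    rw [Finset.sum_congr rfl h2]
    simp
  have hQne : Q ≠ 0 := fun h => by simp [h] at hcoeff
  have hdeg : Q.natDegree ≤ 2 * k := by
    refine (Polynomial.natDegree_sub_le _ _).trans ?_
    apply max_le
    · simpa using Nat.le_mul_of_pos_left k (by norm_num : 0 < 2)
    refine Polynomial.natDegree_sum_le_of_forall_le _ _ (fun j hj => ?_)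
    have hjk : j ≤ k := Nat.lt_succ_iff.1 (Finset.mem_range.1 hj)
    refine (Polynomial.natDegree_C_mul_le _ _).trans ?_
    refine (Polynomial.natDegree_add_le _ _).trans ?_
    apply max_le <;> simp [Polynomial.natDegree_X_pow] <;> omega
  -- the map x ↦ exp(x i) sends zeros to roots of Q
  have heval : ∀ x : ℝ, x ∈ S → Q.IsRoot (Complex.exp (x * Complex.I)) := by
    intro x hx
    have hzero : (1:ℝ) - ∑ j ∈ Finset.range (k+1), (j:ℝ) * b j * Real.cos (j*x) = 0 := hx.2
    set z := Complex.exp (x * Complex.I) with hz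
    have hzpow : ∀ n : ℕ, z ^ n = Complex.exp ((n:ℝ) * x * Complex.I) := by
      intro n
      rw [hz, ← Complex.exp_nat_mul]
      congr 1
      push_cast
      ring
    have hkey : Q.eval z = z ^ k *
        ((1:ℝ) - ∑ j ∈ Finset.range (k+1), (j:ℝ) * b j * Real.cos (j*x) : ℝ) := by
      rw [hQ]
      push_cast
      rw [Polynomial.eval_sub, Polynomial.eval_pow, Polynomial.eval_X,
        Polynomial.eval_finset_sum]
      rw [mul_sub, mul_one, Finset.mul_sum]
      congr 1
      refine Finset.sum_congr rfl (fun j hj => ?_)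
      have hjk : j ≤ k := Nat.lt_succ_iff.1 (Finset.mem_range.1 hj)
      simp only [Polynomial.eval_mul, Polynomial.eval_C, Polynomial.eval_add,
        Polynomial.eval_pow, Polynomial.eval_X]
      rw [hzpow (k+j), hzpow (k-j), hzpow k]
      have hcos : (Real.cos ((j:ℝ)*x) : ℂ) =
          (Complex.exp (((j:ℝ):ℂ)*(x:ℂ)*Complex.I) + Complex.exp (-(((j:ℝ):ℂ)*(x:ℂ))*Complex.I)) / 2 := by
        rw [Complex.ofReal_cos, Complex.cos]
        push_cast
        ring_nf
      have e1 : Complex.exp ((((k+j:ℕ):ℝ):ℂ) * (x:ℂ) * Complex.I)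
          = Complex.exp (((k:ℝ):ℂ)*(x:ℂ)*Complex.I) * Complex.exp (((j:ℝ):ℂ)*(x:ℂ)*Complex.I) := by
        rw [← Complex.exp_add]
        congr 1
        push_cast
        ring
      have e2 : Complex.exp ((((k-j:ℕ):ℝ):ℂ) * (x:ℂ) * Complex.I)
          = Complex.exp (((k:ℝ):ℂ)*(x:ℂ)*Complex.I) * Complex.exp (-(((j:ℝ):ℂ)*(x:ℂ))*Complex.I) := by
        rw [← Complex.exp_add]
        congr 1
        push_cast [hjk]
        ring
      have hcos2 : Complex.cos ((j:ℂ)*(x:ℂ)) =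
          (Complex.exp (((j:ℝ):ℂ)*(x:ℂ)*Complex.I) + Complex.exp (-(((j:ℝ):ℂ)*(x:ℂ))*Complex.I)) / 2 := by
        rw [Complex.cos]
        push_cast
        ring_nf
      rw [e1, e2, hcos2]
      push_cast
      ring
    rw [Polynomial.IsRoot, hkey, hzero]
    push_cast
    ring
  have hinj : Set.InjOn (fun x : ℝ => Complex.exp (x * Complex.I)) S := by
    intro x hx y hy hxy
    have hxy' : Complex.exp ((x:ℂ) * Complex.I) = Complex.exp ((y:ℂ) * Complex.I) := hxy
    rw [Complex.exp_eq_exp_iff_exists_int] at hxy'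
    replace hxy := hxy'
    obtain ⟨n, hn⟩ := hxy
    have hn' : (x:ℂ) = (y:ℂ) + (n:ℂ) * (2*(π:ℂ)) := by
      have hstep : ((x:ℂ)) * Complex.I = ((y:ℂ) + (n:ℂ) * (2*(π:ℂ))) * Complex.I := by
        linear_combination hn
      exact mul_right_cancel₀ Complex.I_ne_zero hstep
    have hR : x = y + n * (2*π) := by exact_mod_cast hn'
    have hx' := hx.1; have hy' := hy.1
    have hπ := Real.pi_pos
    have hn0 : n = 0 := by
      rcases lt_trichotomy n 0 with h | h | h
      · have : (n:ℝ) ≤ -1 := by exact_mod_cast (by omega : n ≤ -1)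
        nlinarith [hx'.1, hx'.2, hy'.1, hy'.2]
      · exact h
      · have : (1:ℝ) ≤ (n:ℝ) := by exact_mod_cast h
        nlinarith [hx'.1, hx'.2, hy'.1, hy'.2]
    rw [hn0] at hR
    simpa using hR
  have himg : (fun x : ℝ => Complex.exp (x * Complex.I)) '' S ⊆ ↑Q.roots.toFinset := by
    rintro _ ⟨x, hx, rfl⟩
    simp only [Finset.coe_sort_coe, Multiset.mem_toFinset, Finset.mem_coe]
    exact (Polynomial.mem_roots hQne).2 (heval x hx)
  have hfin : S.Finite := Set.Finite.of_finite_image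
    ((Q.roots.toFinset.finite_toSet).subset himg) hinj
  refine ⟨hfin, ?_⟩
  calc S.ncard = ((fun x : ℝ => Complex.exp (x * Complex.I)) '' S).ncard :=
        (Set.ncard_image_of_injOn hinj).symm
    _ ≤ (↑Q.roots.toFinset : Set ℂ).ncard :=
        Set.ncard_le_ncard himg (Q.roots.toFinset.finite_toSet)
    _ = Q.roots.toFinset.card := by simp
    _ ≤ Multiset.card Q.roots := Multiset.toFinset_card_le _
    _ ≤ Q.natDegree := Polynomial.card_roots' Q
    _ ≤ 2 * k := hdeg

/-- **Zero-count bound for the sawtooth minus an odd polynomial.**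
For an odd trigonometric polynomial `p` of degree ≤ k, the zero set on the
circle `(−π, π]` of `J₁ − p` (where `J₁(x) = x` on `(−π,π)`, with the
convention that `π` is a zero iff `p(π) = 0`) has at most `2k + 2` elements. -/
theorem sawtooth_zero_count (k : ℕ) (hk : 1 ≤ k) (p : ℝ → ℝ)
    (hp : IsOddTrigPoly k p) :
    ({x ∈ Set.Ioc (-π) π | if x = π then p π = 0 else x = p x}).Finite ∧
    ({x ∈ Set.Ioc (-π) π | if x = π then p π = 0 else x = p x}).ncard ≤ 2 * k + 2 := by
  classical
  obtain ⟨b, hb⟩ := hp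
  set Z := {x ∈ Set.Ioc (-π) π | if x = π then p π = 0 else x = p x} with hZ
  set q : ℝ → ℝ := fun x => 1 - ∑ j ∈ Finset.range (k+1), (j:ℝ) * b j * Real.cos (j*x)
    with hq
  set f : ℝ → ℝ := fun x => x - p x with hf
  have hder : ∀ x : ℝ, HasDerivAt f (q x) x := by
    intro x
    have hsum : HasDerivAt (fun y => ∑ j ∈ Finset.range (k+1), b j * Real.sin (j*y))
        (∑ j ∈ Finset.range (k+1), b j * (Real.cos ((j:ℝ)*x) * (j:ℝ))) x := by
      refine HasDerivAt.fun_sum (fun j _ => ?_)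
      have hinner : HasDerivAt (fun y : ℝ => (j:ℝ) * y) ((j:ℝ) * 1) x :=
        (hasDerivAt_id x).const_mul (j:ℝ)
      have := ((Real.hasDerivAt_sin ((j:ℝ)*x)).comp x (by simpa using hinner)).const_mul (b j)
      simpa using this
    have hpder : HasDerivAt p (∑ j ∈ Finset.range (k+1), b j * (Real.cos ((j:ℝ)*x) * (j:ℝ))) x := by
      have hpe : p = fun y => ∑ j ∈ Finset.range (k+1), b j * Real.sin (j*y) := funext hb
      rw [hpe]; exact hsum
    have := (hasDerivAt_id x).sub hpder
    have heq : q x = 1 - ∑ j ∈ Finset.range (k+1), b j * (Real.cos ((j:ℝ)*x) * (j:ℝ)) := by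
      simp only [hq]
      congr 1
      exact Finset.sum_congr rfl fun j _ => by ring
    rw [hf, heq]
    exact this
  have hdiff : Differentiable ℝ f := fun x => (hder x).differentiableAt
  have hderiv : ∀ x, deriv f x = q x := fun x => (hder x).deriv
  obtain ⟨hQfin, hQcard⟩ := trig_deriv_zeros k b
  set D := hQfin.toFinset with hD
  have hDcard : D.card ≤ 2 * k := by
    rwa [Set.ncard_eq_toFinset_card _ hQfin] at hQcard
  have key : ∀ T : Finset ℝ, ↑T ⊆ Z → T.card ≤ 2 * k + 2 := by
    intro T hTZ
    have h1 : (T.erase π).card ≤ D.card + 1 := by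
      refine card_le_of_rolle (a := -π) (b := π) hdiff (T.erase π) ?_ D ?_
      · intro x hx
        have hxπ : x ≠ π := Finset.ne_of_mem_erase hx
        have hxZ : x ∈ Z := hTZ (Finset.mem_of_mem_erase hx)
        have hxe := hxZ.2
        rw [if_neg hxπ] at hxe
        refine ⟨⟨hxZ.1.1, lt_of_le_of_ne hxZ.1.2 hxπ⟩, ?_⟩
        simp only [hf]
        rw [← hxe, sub_self]
      · intro x hx hdx
        rw [hderiv] at hdx
        rw [hD, Set.Finite.mem_toFinset]
        exact ⟨⟨hx.1, le_of_lt hx.2⟩, hdx⟩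
    have h2 : T.card ≤ (T.erase π).card + 1 := by
      have : T ⊆ insert π (T.erase π) := Finset.subset_insert_iff.2 (subset_refl _)
      calc T.card ≤ (insert π (T.erase π)).card := Finset.card_le_card this
        _ ≤ (T.erase π).card + 1 := Finset.card_insert_le _ _
    omega
  have hfin : Z.Finite := by
    by_contra h
    have hinf : Z.Infinite := h
    obtain ⟨T, hTs, hTcard⟩ := hinf.exists_subset_card_eq (2*k+3)
    have := key T hTs
    omega
  refine ⟨hfin, ?_⟩
  rw [Set.ncard_eq_toFinset_card _ hfin]
  exact key hfin.toFinset (by simp)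
end
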